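/- Let F be a field with more than k elements, let n > k ≥ 1 with n + k odd, let S be a linear map on M_{(n-1)×k}(F), and define the linear map T on M_{n×k}(F) by T = L^+ ∘ S ∘ L^-. If there exist an (n−1)×(n−1) matrix A' and a k×k matrix B' over F satisfying det_{(n-1),k}(A'(|d]) · det(B') = sgn(d) for every k-element subset d of {1,...,n−1} and S(Y) = A'YB' for all (n−1)×k matrices Y, then there exist an n×n matrix A and a k×k matrix B over F satisfying det_{n,k}(A(|d]) · det(B) = sgn(d) for every k-element subset d of {1,...,n} and T(X) = AXB for all n×k matrices X. -/
import Mathlib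

open Classical in
noncomputable def cullisDet {F : Type*} [Field F] {n k : ℕ}
    (X : Matrix (Fin n) (Fin k) F) : F :=
  ∑ f : Fin k → Fin n, if StrictMono f then
    (-1 : F) ^ (∑ j : Fin k, ((f j : ℕ) - (j : ℕ))) * (X.submatrix f id).det
  else 0


/-- `L⁻`: subtract the last row from the others and delete it. -/
def Lminus {F : Type*} [Field F] {n k : ℕ}
    (X : Matrix (Fin n) (Fin k) F) : Matrix (Fin (n - 1)) (Fin k) F :=
  fun i j => X ⟨i, by have := i.isLt; omega⟩ j - X ⟨n - 1, by have := i.isLt; omega⟩ j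


/-- `L⁺`: append a zero row at the bottom. -/
def Lplus {F : Type*} [Field F] {n k : ℕ}
    (Y : Matrix (Fin (n - 1)) (Fin k) F) : Matrix (Fin n) (Fin k) F :=
  fun i j => if h : (i : ℕ) < n - 1 then Y ⟨i, h⟩ j else 0

section Helpers

open Finset

set_option linter.unusedSectionVars false

variable {F : Type*} [Field F] {n k m p : ℕ}

lemma neg_one_pow_sub_eq {a b : ℕ} (h : b ≤ a) : ((-1:F))^(a-b) = (-1)^a * (-1)^b := by
  conv_rhs => rw [show a = (a - b) + b from (Nat.sub_add_cancel h).symm]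
  rw [pow_add, mul_assoc, ← pow_add, ← two_mul, pow_mul, neg_one_sq, one_pow, mul_one]

lemma neg_one_pow_parity {a b : ℕ} (h : a % 2 = b % 2) : ((-1:F))^a = (-1)^b := by
  rw [← Nat.div_add_mod a 2, ← Nat.div_add_mod b 2, pow_add, pow_add, pow_mul, pow_mul,
    neg_one_sq, one_pow, one_pow, h]

lemma sum_range_neg_one_pow :
    ∀ m : ℕ, (∑ t ∈ Finset.range m, ((-1:F))^t) = if Even m then 0 else 1 := by
  intro m
  induction m with
  | zero => simp
  | succ m ih =>
    rw [Finset.sum_range_succ, ih]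
    rcases Nat.even_or_odd m with h | h
    · simp [h, h.neg_one_pow, Nat.even_add_one]
    · simp [h.neg_one_pow, Nat.even_add_one, Nat.not_even_iff_odd.2 h]

lemma strictMono_fin_le_apply {f : Fin k → Fin m} (hf : StrictMono f) (j : Fin k) :
    (j:ℕ) ≤ (f j : ℕ) := by
  obtain ⟨t, ht⟩ := j
  induction t with
  | zero => exact Nat.zero_le _
  | succ t ih =>
    have h1 : (⟨t, by omega⟩ : Fin k) < ⟨t+1, ht⟩ := by simp [Fin.lt_def]
    have := ih (by omega)
    have h2 := hf h1
    simp only [Fin.lt_def, Fin.val_mk] at h2 this ⊢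
    omega

lemma mul_submatrix_id {q : ℕ} (M : Matrix (Fin p) (Fin q) F) (N : Matrix (Fin q) (Fin m) F)
    (g : Fin k → Fin m) : (M * N).submatrix id g = M * (N.submatrix id g) := by
  ext i j; simp [Matrix.mul_apply]

lemma cullisDet_submatrix_swap (M : Matrix (Fin m) (Fin p) F) (g : Fin k → Fin p)
    (a b : Fin k) (hab : a ≠ b) :
    cullisDet (M.submatrix id (g ∘ Equiv.swap a b)) = - cullisDet (M.submatrix id g) := by
  classical
  simp only [cullisDet, ← Finset.sum_neg_distrib]
  refine Finset.sum_congr rfl fun f _ => ?_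
  split
  · have h1 : ((M.submatrix id (g ∘ Equiv.swap a b)).submatrix f id)
        = (M.submatrix f g).submatrix id (Equiv.swap a b) := by
      ext i j; simp
    have h2 : ((M.submatrix id g).submatrix f id) = M.submatrix f g := by
      ext i j; simp
    rw [h1, h2, Matrix.det_permute', Equiv.Perm.sign_swap hab]
    push_cast
    ring
  · rw [neg_zero]

lemma cullisDet_zero_of_not_injective (M : Matrix (Fin m) (Fin p) F) (g : Fin k → Fin p)
    (hg : ¬ Function.Injective g) : cullisDet (M.submatrix id g) = 0 := by
  classical
  rw [Function.not_injective_iff] at hg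
  obtain ⟨a, b, hab, hne⟩ := hg
  simp only [cullisDet]
  refine Finset.sum_eq_zero fun f _ => ?_
  split
  · rw [Matrix.det_zero_of_column_eq hne (fun i => by simp [hab]), mul_zero]
  · rfl

lemma cullisDet_Lplus (hn : 2 ≤ n) (Y : Matrix (Fin (n - 1)) (Fin k) F) :
    cullisDet (Lplus Y : Matrix (Fin n) (Fin k) F) = cullisDet Y := by
  classical
  simp only [cullisDet]
  have hzero : ∀ f ∈ (univ : Finset (Fin k → Fin n)),
      (if StrictMono f then (-1 : F) ^ (∑ j : Fin k, ((f j : ℕ) - (j : ℕ))) *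
        ((Lplus Y : Matrix (Fin n) (Fin k) F).submatrix f id).det else 0) ≠ 0 →
      (∀ j, (f j : ℕ) < n - 1) := by
    intro f _ hne j
    by_contra hj
    apply hne
    split
    · rw [Matrix.det_eq_zero_of_row_eq_zero j (fun j' => by
        simp only [Matrix.submatrix_apply, Lplus, id_eq]
        rw [dif_neg hj]), mul_zero]
    · rfl
  rw [← Finset.sum_filter_of_ne hzero]
  refine Finset.sum_nbij'
    (i := fun f j => if h : (f j : ℕ) < n - 1 then (⟨f j, h⟩ : Fin (n-1)) else ⟨0, by omega⟩)
    (j := fun g j => Fin.castLE (by omega : n - 1 ≤ n) (g j)) ?_ ?_ ?_ ?_ ?_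
  · intro f hf; exact Finset.mem_univ _
  · intro g hg
    simp only [Finset.mem_filter, Finset.mem_univ, true_and]
    intro j
    exact (g j).isLt
  · intro f hf
    simp only [Finset.mem_filter, Finset.mem_univ, true_and] at hf
    funext j
    beta_reduce
    rw [dif_pos (hf j)]
    rfl
  · intro g hg
    funext j
    beta_reduce
    simp only [Fin.coe_castLE]
    rw [dif_pos (g j).isLt]
  · intro f hf
    simp only [Finset.mem_filter, Finset.mem_univ, true_and] at hf
    beta_reduce
    have hfun : ∀ j, (if h : (f j : ℕ) < n - 1 then (⟨f j, h⟩ : Fin (n-1)) else ⟨0, by omega⟩)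
        = (⟨f j, hf j⟩ : Fin (n-1)) := fun j => dif_pos (hf j)
    simp only [hfun]
    have hSM : StrictMono f ↔ StrictMono (fun j => (⟨f j, hf j⟩ : Fin (n-1))) := by
      constructor
      · intro h a b hab
        have := Fin.lt_def.mp (h hab)
        beta_reduce
        exact Fin.mk_lt_mk.mpr this
      · intro h a b hab
        have := Fin.mk_lt_mk.mp (h hab)
        exact Fin.lt_def.mpr this
    have hdet : ((Lplus Y : Matrix (Fin n) (Fin k) F).submatrix f id)
        = Y.submatrix (fun j => (⟨f j, hf j⟩ : Fin (n-1))) id := by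
      ext i j
      simp only [Matrix.submatrix_apply, Lplus, id_eq]
      rw [dif_pos (hf i)]
    rw [hdet]
    by_cases hS : StrictMono f
    · rw [if_pos hS, if_pos (hSM.1 hS)]
    · rw [if_neg hS, if_neg (fun h => hS (hSM.2 h))]

noncomputable def cullisUpdateLM (M : Matrix (Fin m) (Fin k) F) (c : Fin k) :
    (Fin m → F) →ₗ[F] F where
  toFun w := cullisDet (M.updateCol c w)
  map_add' u v := by
    classical
    simp only [cullisDet, ← Finset.sum_add_distrib]
    refine Finset.sum_congr rfl fun f _ => ?_
    have h : ∀ w : Fin m → F, (M.updateCol c w).submatrix f id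
        = (M.submatrix f id).updateCol c (w ∘ f) := by
      intro w; ext i j; simp [Matrix.updateCol_apply]
    split
    · rw [h, h, h, show (u + v) ∘ f = (u ∘ f) + (v ∘ f) from rfl,
        Matrix.det_updateCol_add, mul_add]
    · rw [add_zero]
  map_smul' s u := by
    classical
    simp only [RingHom.id_apply, cullisDet, Finset.smul_sum]
    refine Finset.sum_congr rfl fun f _ => ?_
    have h : ∀ w : Fin m → F, (M.updateCol c w).submatrix f id
        = (M.submatrix f id).updateCol c (w ∘ f) := by
      intro w; ext i j; simp [Matrix.updateCol_apply]
    split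
    · rw [h, h, show (s • u) ∘ f = s • (u ∘ f) from rfl, Matrix.det_updateCol_smul]
      simp only [smul_eq_mul]
      ring
    · simp

lemma card_filter_lt_fin (i : Fin m) :
    ((univ : Finset (Fin m)).filter (fun j => j < i)).card = (i:ℕ) := by
  have h : (univ : Finset (Fin m)).filter (fun j => j < i) = Finset.Iio i := by
    ext j; simp
  rw [h, Fin.card_Iio]

lemma rank_orderEmbOfFin {c : ℕ} (s : Finset (Fin m)) (h : s.card = c) (i : Fin c) :
    (s.filter (fun y => y < s.orderEmbOfFin h i)).card = (i:ℕ) := by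
  classical
  have himg : s.filter (fun y => y < s.orderEmbOfFin h i)
      = (univ.filter (fun j : Fin c => j < i)).image (fun j => s.orderEmbOfFin h j) := by
    ext y
    simp only [mem_filter, mem_image, mem_univ, true_and]
    constructor
    · rintro ⟨hy, hlt⟩
      have : y ∈ Set.range (s.orderEmbOfFin h) := by
        rw [Finset.range_orderEmbOfFin]; exact hy
      obtain ⟨j, hj⟩ := this
      refine ⟨j, ?_, hj⟩
      rw [← hj] at hlt
      exact (s.orderEmbOfFin h).strictMono.lt_iff_lt.mp hlt
    · rintro ⟨j, hji, rfl⟩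
      exact ⟨Finset.orderEmbOfFin_mem s h j, (s.orderEmbOfFin h).strictMono hji⟩
  rw [himg, Finset.card_image_of_injective _ (s.orderEmbOfFin h).injective,
    card_filter_lt_fin]

lemma sum_rank (s : Finset (Fin m)) (f : ℕ → F) :
    ∑ x ∈ s, f ((s.filter (fun y => y < x)).card) = ∑ t ∈ Finset.range s.card, f t := by
  classical
  rw [← Fin.sum_univ_eq_sum_range]
  refine (Finset.sum_bij (fun (i : Fin s.card) _ => s.orderEmbOfFin rfl i) ?_ ?_ ?_ ?_).symm
  · intro i _; exact Finset.orderEmbOfFin_mem s rfl i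
  · intro a _ b _ hab; exact (s.orderEmbOfFin rfl).injective hab
  · intro x hx
    have : x ∈ Set.range (s.orderEmbOfFin rfl) := by
      rw [Finset.range_orderEmbOfFin]; exact hx
    obtain ⟨i, hi⟩ := this
    exact ⟨i, Finset.mem_univ i, hi⟩
  · intro i _
    rw [rank_orderEmbOfFin]

lemma bubble (Φ : (Fin k → Fin m) → F) (c : F)
    (hswap : ∀ (g : Fin k → Fin m) (a b : Fin k), a ≠ b → Φ (g ∘ Equiv.swap a b) = - Φ g)
    (hmono : ∀ g, StrictMono g → Φ g = (-1)^(∑ j, ((g j : ℕ))) * c) :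
    ∀ (N : ℕ) (g : Fin k → Fin m) (p : Fin k), Function.Injective g →
      (∀ j j' : Fin k, j < j' → j ≠ p → j' ≠ p → g j < g j') →
      (∀ j, p < j → g p < g j) →
      ((univ : Finset (Fin k)).filter (fun j => j < p ∧ g p < g j)).card = N →
      Φ g = (-1)^N * (-1)^(∑ j, ((g j : ℕ))) * c := by
  intro N
  induction N with
  | zero =>
    intro g p hinj hsort hright hcard
    have hempty : ∀ j, ¬ (j < p ∧ g p < g j) := by
      intro j hj
      have hmem : j ∈ (univ : Finset (Fin k)).filter (fun j => j < p ∧ g p < g j) :=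
        Finset.mem_filter.mpr ⟨Finset.mem_univ _, hj⟩
      rw [Finset.card_eq_zero] at hcard
      rw [hcard] at hmem
      exact absurd hmem (Finset.notMem_empty j)
    have hSM : StrictMono g := by
      intro a b hab
      rcases eq_or_ne a p with rfl | ha
      · exact hright b hab
      rcases eq_or_ne b p with rfl | hb
      · have hne : g a ≠ g b := fun h => ha (hinj h)
        rcases lt_or_gt_of_ne hne with h | h
        · exact h
        · exact absurd ⟨hab, h⟩ (hempty a)
      · exact hsort a b hab ha hb
    rw [hmono g hSM, pow_zero, one_mul]
  | succ N ih =>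
    intro g p hinj hsort hright hcard
    have hex : ∃ j, j < p ∧ g p < g j := by
      have : ((univ : Finset (Fin k)).filter (fun j => j < p ∧ g p < g j)).Nonempty := by
        rw [← Finset.card_pos, hcard]; omega
      obtain ⟨j, hj⟩ := this
      exact ⟨j, (Finset.mem_filter.mp hj).2⟩
    obtain ⟨j₀, hj₀⟩ := hex
    have hp1 : 1 ≤ (p:ℕ) := by
      have := Fin.lt_def.mp hj₀.1; omega
    have hklt : (p:ℕ) - 1 < k := by have := p.isLt; omega
    set q : Fin k := ⟨(p:ℕ) - 1, hklt⟩ with hq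
    have hqp : q < p := by rw [Fin.lt_def]; simp [hq]; omega
    have hqps : (q:ℕ) + 1 = (p:ℕ) := by simp [hq]; omega
    have hqnep : q ≠ p := ne_of_lt hqp
    have hgq : g p < g q := by
      by_contra hcon
      push_neg at hcon
      have hne : g q ≠ g p := fun h' => hqnep (hinj h')
      have hlt : g q < g p := lt_of_le_of_ne hcon hne
      have hnone : ∀ j, ¬(j < p ∧ g p < g j) := by
        rintro j ⟨h1, h2⟩
        rcases eq_or_ne j q with rfl | hjq
        · exact absurd h2 (not_lt.mpr (le_of_lt hlt))
        · have hjq' : j < q := by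
            rw [Fin.lt_def] at h1 ⊢
            have : (j:ℕ) ≠ (q:ℕ) := fun hh => hjq (Fin.ext hh)
            omega
          have hlt2 := hsort j q hjq' (ne_of_lt h1) hqnep
          exact absurd h2 (not_lt.mpr (le_of_lt (lt_trans hlt2 hlt)))
      have : ((univ : Finset (Fin k)).filter (fun j => j < p ∧ g p < g j)) = ∅ := by
        apply Finset.filter_eq_empty_iff.mpr
        intro j _; exact hnone j
      rw [this] at hcard
      simp at hcard
    have hg'q : (g ∘ Equiv.swap q p) q = g p := by simp
    have hg'p : (g ∘ Equiv.swap q p) p = g q := by simp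
    have hg'o : ∀ x, x ≠ q → x ≠ p → (g ∘ Equiv.swap q p) x = g x := by
      intro x h1 h2; simp [Function.comp, Equiv.swap_apply_of_ne_of_ne h1 h2]
    have hΦ : Φ (g ∘ Equiv.swap q p) = - Φ g := hswap g q p hqnep
    have hsort' : ∀ j j' : Fin k, j < j' → j ≠ q → j' ≠ q →
        (g ∘ Equiv.swap q p) j < (g ∘ Equiv.swap q p) j' := by
      intro j j' hlt hj hj'
      rcases eq_or_ne j p with rfl | hjp
      · rw [hg'p, hg'o j' hj' (ne_of_gt hlt)]
        exact hsort q j' (lt_trans hqp hlt) hqnep (ne_of_gt hlt)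
      · rw [hg'o j hj hjp]
        rcases eq_or_ne j' p with rfl | hj'p
        · rw [hg'p]
          have hjq : j < q := by
            rw [Fin.lt_def] at hlt ⊢
            have : (j:ℕ) ≠ (q:ℕ) := fun hh => hj (Fin.ext hh)
            omega
          exact hsort j q hjq hjp hqnep
        · rw [hg'o j' hj' hj'p]
          exact hsort j j' hlt hjp hj'p
    have hright' : ∀ j, q < j → (g ∘ Equiv.swap q p) q < (g ∘ Equiv.swap q p) j := by
      intro j hj
      rw [hg'q]
      rcases eq_or_ne j p with rfl | hjp
      · rw [hg'p]; exact hgq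
      · rw [hg'o j (ne_of_gt hj) hjp]
        have hpj : p < j := by
          rw [Fin.lt_def] at hj ⊢
          have : (j:ℕ) ≠ (p:ℕ) := fun hh => hjp (Fin.ext hh)
          omega
        exact hright j hpj
    have hcard' : ((univ : Finset (Fin k)).filter
        (fun j => j < q ∧ (g ∘ Equiv.swap q p) q < (g ∘ Equiv.swap q p) j)).card = N := by
      have hset : ((univ : Finset (Fin k)).filter
          (fun j => j < q ∧ (g ∘ Equiv.swap q p) q < (g ∘ Equiv.swap q p) j))
          = ((univ : Finset (Fin k)).filter (fun j => j < p ∧ g p < g j)).erase q := by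
        ext j
        simp only [Finset.mem_filter, Finset.mem_erase, Finset.mem_univ, true_and]
        constructor
        · rintro ⟨h1, h2⟩
          have hjq : j ≠ q := ne_of_lt h1
          have hjp : j ≠ p := by
            intro hh; subst hh
            rw [Fin.lt_def] at h1; omega
          rw [hg'q, hg'o j hjq hjp] at h2
          exact ⟨hjq, lt_trans h1 hqp, h2⟩
        · rintro ⟨hjq, h1, h2⟩
          have hjp : j ≠ p := ne_of_lt h1
          have hjq' : j < q := by
            rw [Fin.lt_def] at h1 ⊢
            have : (j:ℕ) ≠ (q:ℕ) := fun hh => hjq (Fin.ext hh)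
            omega
          rw [hg'q, hg'o j hjq hjp]
          exact ⟨hjq', h2⟩
      rw [hset, Finset.card_erase_of_mem (Finset.mem_filter.mpr ⟨Finset.mem_univ _, hqp, hgq⟩),
        hcard]
      omega
    have happ := ih (g ∘ Equiv.swap q p) q (hinj.comp (Equiv.swap q p).injective)
      hsort' hright' hcard'
    have hsum : (∑ j, (((g ∘ Equiv.swap q p) j : ℕ))) = ∑ j, ((g j : ℕ)) :=
      Equiv.sum_comp (Equiv.swap q p) (fun j => ((g j : ℕ)))
    have hΦ2 : Φ g = - Φ (g ∘ Equiv.swap q p) := by rw [hΦ, neg_neg]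
    rw [hΦ2, happ, hsum, pow_succ]
    ring

end Helpers
section Matrices

open Finset

set_option linter.unusedSectionVars false

variable {F : Type*} [Field F] {n k : ℕ}

def Pmat (F : Type*) [Field F] (n : ℕ) : Matrix (Fin (n-1)) (Fin n) F :=
  fun i j => (if (j:ℕ) = (i:ℕ) then 1 else 0) - (if (j:ℕ) = n-1 then 1 else 0)

def Qmat (F : Type*) [Field F] (n : ℕ) : Matrix (Fin n) (Fin (n-1)) F :=
  fun i j => if (i:ℕ) = (j:ℕ) then 1 else 0

lemma Lplus_eq (Y : Matrix (Fin (n-1)) (Fin k) F) :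
    (Lplus Y : Matrix (Fin n) (Fin k) F) = Qmat F n * Y := by
  classical
  ext i j
  rw [Matrix.mul_apply]
  by_cases h : (i:ℕ) < n - 1
  · rw [Finset.sum_eq_single (⟨(i:ℕ), h⟩ : Fin (n-1))]
    · simp only [Lplus, Qmat, dif_pos h]
      simp
    · intro b _ hb
      have hbv : (i:ℕ) ≠ (b:ℕ) := by
        intro hh
        exact hb (Fin.ext hh.symm : b = ⟨(i:ℕ), h⟩)
      rw [Qmat]
      simp only [if_neg hbv, zero_mul]
    · intro hmem; exact absurd (Finset.mem_univ _) hmem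
  · simp only [Lplus, dif_neg h]
    refine (Finset.sum_eq_zero fun b _ => ?_).symm
    have hbv : (i:ℕ) ≠ (b:ℕ) := by have := b.isLt; omega
    rw [Qmat]
    simp only [if_neg hbv, zero_mul]

lemma Lminus_eq (X : Matrix (Fin n) (Fin k) F) :
    (Lminus X : Matrix (Fin (n-1)) (Fin k) F) = Pmat F n * X := by
  classical
  ext i j
  have hi : (i:ℕ) < n - 1 := i.isLt
  have hn : 2 ≤ n := by omega
  rw [Matrix.mul_apply]
  have hsplit : ∀ l : Fin n, Pmat F n i l * X l j
      = (if (l:ℕ) = (i:ℕ) then 1 else 0) * X l j - (if (l:ℕ) = n-1 then 1 else 0) * X l j := by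
    intro l
    rw [Pmat, sub_mul]
  rw [Finset.sum_congr rfl (fun l _ => hsplit l), Finset.sum_sub_distrib]
  have h1 : (∑ l : Fin n, (if (l:ℕ) = (i:ℕ) then (1:F) else 0) * X l j)
      = X ⟨(i:ℕ), by omega⟩ j := by
    rw [Finset.sum_eq_single (⟨(i:ℕ), by omega⟩ : Fin n)]
    · rw [if_pos rfl, one_mul]
    · intro b _ hb
      have hbv : (b:ℕ) ≠ (i:ℕ) := fun hh => hb (Fin.ext hh)
      rw [if_neg hbv, zero_mul]
    · intro hmem; exact absurd (Finset.mem_univ _) hmem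
  have h2 : (∑ l : Fin n, (if (l:ℕ) = n-1 then (1:F) else 0) * X l j)
      = X ⟨n-1, by omega⟩ j := by
    rw [Finset.sum_eq_single (⟨n-1, by omega⟩ : Fin n)]
    · rw [if_pos rfl, one_mul]
    · intro b _ hb
      have hbv : (b:ℕ) ≠ n-1 := fun hh => hb (Fin.ext hh)
      rw [if_neg hbv, zero_mul]
    · intro hmem; exact absurd (Finset.mem_univ _) hmem
  rw [h1, h2]
  rfl

end Matrices
open Finset in
/-- Lemma 4.11: lifting a two-sided multiplication preserver from size
`(n-1) × k` to size `n × k` via `T = L⁺ ∘ S ∘ L⁻`. -/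
theorem stmt12 {F : Type*} [Field F] {n k : ℕ} (hk : 1 ≤ k) (hkn : k < n)
    (hodd : Odd (n + k)) (hF : (k : Cardinal) < Cardinal.mk F)
    (S : Matrix (Fin (n - 1)) (Fin k) F →ₗ[F] Matrix (Fin (n - 1)) (Fin k) F)
    (A' : Matrix (Fin (n - 1)) (Fin (n - 1)) F) (B' : Matrix (Fin k) (Fin k) F)
    (hA'B' : ∀ (d : Finset (Fin (n - 1))) (hd : d.card = k),
      cullisDet (A'.submatrix id (fun j => d.orderEmbOfFin hd j)) * B'.det =
        (-1 : F) ^ ((∑ i ∈ d, (i : ℕ)) - ∑ j : Fin k, (j : ℕ)))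
    (hS : ∀ Y, S Y = A' * Y * B') :
    ∃ (A : Matrix (Fin n) (Fin n) F) (B : Matrix (Fin k) (Fin k) F),
      (∀ (d : Finset (Fin n)) (hd : d.card = k),
        cullisDet (A.submatrix id (fun j => d.orderEmbOfFin hd j)) * B.det =
          (-1 : F) ^ ((∑ i ∈ d, (i : ℕ)) - ∑ j : Fin k, (j : ℕ))) ∧
      ∀ X : Matrix (Fin n) (Fin k) F, Lplus (S (Lminus X)) = A * X * B := by
  classical
  have hn2 : 2 ≤ n := by omega
  refine ⟨Qmat F n * A' * Pmat F n, B', ?_, ?_⟩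
  swap
  · intro X
    rw [hS, Lminus_eq, Lplus_eq]
    simp only [Matrix.mul_assoc]
  intro d hd
  have hemb := fun j => Finset.orderEmbOfFin_mem d hd j
  have hembSM : StrictMono (fun j => d.orderEmbOfFin hd j) := (d.orderEmbOfFin hd).strictMono
  have hembSurj : ∀ x ∈ d, ∃ j, d.orderEmbOfFin hd j = x := by
    intro x hx
    have : x ∈ Set.range (d.orderEmbOfFin hd) := by
      rw [Finset.range_orderEmbOfFin]; exact hx
    obtain ⟨j, hj⟩ := this
    exact ⟨j, hj⟩
  -- total sum identity
  have hsum_d : (∑ i ∈ d, (i:ℕ)) = ∑ j : Fin k, ((d.orderEmbOfFin hd j : ℕ)) := by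
    refine (Finset.sum_bij (fun (j : Fin k) _ => d.orderEmbOfFin hd j)
      (fun j _ => hemb j) ?_ ?_ ?_).symm
    · intro a _ b _ hab; exact (d.orderEmbOfFin hd).injective hab
    · intro x hx; obtain ⟨j, hj⟩ := hembSurj x hx; exact ⟨j, Finset.mem_univ j, hj⟩
    · intro j _; rfl
  have hT_le : (∑ j : Fin k, (j:ℕ)) ≤ ∑ i ∈ d, (i:ℕ) := by
    rw [hsum_d]
    exact Finset.sum_le_sum fun j _ => strictMono_fin_le_apply hembSM j
  -- the general monotone version of hA'B'
  have hmono' : ∀ g : Fin k → Fin (n-1), StrictMono g →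
      cullisDet (A'.submatrix id g) * B'.det =
        (-1:F)^(∑ j : Fin k, ((g j : ℕ))) * (-1:F)^(∑ j : Fin k, ((j : ℕ))) := by
    intro g hg
    have hcard : (Finset.image g univ).card = k := by
      rw [Finset.card_image_of_injective _ hg.injective, card_univ, Fintype.card_fin]
    have hgs : ∀ x, g x ∈ Finset.image g univ := fun x =>
      Finset.mem_image_of_mem g (Finset.mem_univ x)
    have heq := Finset.orderEmbOfFin_unique hcard hgs hg
    have h1 := hA'B' (Finset.image g univ) hcard
    have hfn : (fun j => (Finset.image g univ).orderEmbOfFin hcard j) = g := heq.symm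
    rw [hfn] at h1
    have hsum : (∑ i ∈ Finset.image g univ, (i:ℕ)) = ∑ j : Fin k, ((g j : ℕ)) :=
      Finset.sum_image (fun a _ b _ hab => hg.injective hab)
    have hle : (∑ j : Fin k, (j:ℕ)) ≤ ∑ j : Fin k, ((g j : ℕ)) :=
      Finset.sum_le_sum fun j _ => strictMono_fin_le_apply hg j
    rw [hsum] at h1
    rw [h1, neg_one_pow_sub_eq hle]
  -- rewrite the matrix as Lplus (A' * Pd)
  set Pd : Matrix (Fin (n-1)) (Fin k) F :=
    (Pmat F n).submatrix id (fun j => d.orderEmbOfFin hd j) with hPd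
  have key : cullisDet ((Qmat F n * A' * Pmat F n).submatrix id (fun j => d.orderEmbOfFin hd j))
      = cullisDet (A' * Pd) := by
    rw [mul_submatrix_id, ← hPd, Matrix.mul_assoc, ← Lplus_eq, cullisDet_Lplus hn2]
  rw [key, neg_one_pow_sub_eq hT_le]
  by_cases hmem : (⟨n-1, by omega⟩ : Fin n) ∈ d
  · -- case n-1 ∈ d
    have hklt : k - 1 < k := by omega
    set last : Fin k := ⟨k-1, hklt⟩ with hlastdef
    have hle_last : ∀ j : Fin k, j ≤ last := by
      intro j
      rw [Fin.le_def]
      have := j.isLt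
      simp only [hlastdef, Fin.val_mk]
      omega
    have hlast : (d.orderEmbOfFin hd last : ℕ) = n - 1 := by
      obtain ⟨j₀, hj₀⟩ := hembSurj _ hmem
      have h1 : d.orderEmbOfFin hd j₀ ≤ d.orderEmbOfFin hd last :=
        (d.orderEmbOfFin hd).monotone (hle_last j₀)
      have h2 : (d.orderEmbOfFin hd last : ℕ) ≤ n - 1 := by
        have := (d.orderEmbOfFin hd last).isLt; omega
      rw [hj₀, Fin.le_def] at h1
      have h1' : n - 1 ≤ (d.orderEmbOfFin hd last : ℕ) := h1
      omega
    have hemblt : ∀ j : Fin k, j ≠ last → (d.orderEmbOfFin hd j : ℕ) < n - 1 := by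
      intro j hj
      have hlt2 : j < last := lt_of_le_of_ne (hle_last j) hj
      have h3 := Fin.lt_def.mp ((d.orderEmbOfFin hd).strictMono hlt2)
      omega
    set C : Matrix (Fin (n-1)) (Fin k) F :=
      fun i j => if h : (d.orderEmbOfFin hd j : ℕ) < n-1
        then A' i ⟨(d.orderEmbOfFin hd j : ℕ), h⟩ else 0 with hC
    set w : Fin (n-1) → F := fun i => ∑ l : Fin (n-1), -(A' i l) with hw
    have hCoth : ∀ (i : Fin (n-1)) (j : Fin k) (hj : j ≠ last),
        C i j = A' i ⟨(d.orderEmbOfFin hd j : ℕ), hemblt j hj⟩ :=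
      fun i j hj => dif_pos (hemblt j hj)
    have hAPd : A' * Pd = C.updateCol last w := by
      ext i j
      rw [Matrix.mul_apply, Matrix.updateCol_apply]
      by_cases hj : j = last
      · subst hj
        rw [if_pos rfl]
        refine Finset.sum_congr rfl fun l _ => ?_
        simp only [hPd, Matrix.submatrix_apply, Pmat, id_eq]
        have h1 : ¬ ((d.orderEmbOfFin hd last : ℕ) = (l:ℕ)) := by
          have := l.isLt; omega
        rw [if_neg h1, if_pos hlast]
        ring
      · rw [if_neg hj, hCoth i j hj]
        rw [Finset.sum_eq_single (⟨(d.orderEmbOfFin hd j : ℕ), hemblt j hj⟩ : Fin (n-1))]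
        · simp only [hPd, Matrix.submatrix_apply, Pmat, id_eq, Fin.val_mk]
          have hne2 : ¬ ((d.orderEmbOfFin hd j : ℕ) = n - 1) := by
            have := hemblt j hj; omega
          simp [hne2]
        · intro b _ hb
          have hbv : ¬ ((d.orderEmbOfFin hd j : ℕ) = (b:ℕ)) := by
            intro hh; exact hb (Fin.ext hh.symm)
          have hne2 : ¬ ((d.orderEmbOfFin hd j : ℕ) = n - 1) := by
            have := hemblt j hj; omega
          simp only [hPd, Matrix.submatrix_apply, Pmat, id_eq]
          rw [if_neg hbv, if_neg hne2, sub_zero, mul_zero]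
        · intro hmem'; exact absurd (Finset.mem_univ _) hmem'
    have hwsum : w = ∑ l : Fin (n-1), (fun i => -(A' i l)) := by
      funext i
      rw [hw, Finset.sum_apply]
    have hlin : cullisDet (C.updateCol last w)
        = ∑ l : Fin (n-1), cullisDet (C.updateCol last (fun i => -(A' i l))) := by
      have h1 : cullisDet (C.updateCol last w) = (cullisUpdateLM C last) w := rfl
      rw [h1, hwsum, map_sum]
      rfl
    set G : Fin (n-1) → Fin k → Fin (n-1) :=
      fun l j => if h : (d.orderEmbOfFin hd j : ℕ) < n-1
        then ⟨(d.orderEmbOfFin hd j : ℕ), h⟩ else l with hG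
    have hGlast : ∀ l, G l last = l := by
      intro l
      have h := hlast
      exact dif_neg (by omega)
    have hGoth : ∀ l (j : Fin k) (hj : j ≠ last),
        G l j = ⟨(d.orderEmbOfFin hd j : ℕ), hemblt j hj⟩ :=
      fun l j hj => dif_pos (hemblt j hj)
    have hGC : ∀ l, C.updateCol last (fun i => A' i l) = A'.submatrix id (G l) := by
      intro l; ext i j
      rw [Matrix.updateCol_apply, Matrix.submatrix_apply]
      by_cases hj : j = last
      · subst hj
        rw [if_pos rfl, hGlast l]
        rfl
      · rw [if_neg hj, hGoth l j hj, hCoth i j hj]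
        rfl
    have hmain : cullisDet (A' * Pd) * B'.det
        = ∑ l : Fin (n-1), -(cullisDet (A'.submatrix id (G l)) * B'.det) := by
      rw [hAPd, hlin, Finset.sum_mul]
      refine Finset.sum_congr rfl fun l _ => ?_
      have hneg : cullisDet (C.updateCol last (fun i => -(A' i l)))
          = - cullisDet (C.updateCol last (fun i => A' i l)) := by
        have h1 : (fun i => -(A' i l)) = -(fun i => A' i l) := rfl
        rw [h1]
        exact map_neg (cullisUpdateLM C last) _
      rw [hneg, hGC l, neg_mul]
    have hswapΦ : ∀ (g : Fin k → Fin (n-1)) (a b : Fin k), a ≠ b →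
        cullisDet (A'.submatrix id (g ∘ Equiv.swap a b)) * B'.det
          = -(cullisDet (A'.submatrix id g) * B'.det) := by
      intro g a b hab
      rw [cullisDet_submatrix_swap A' g a b hab, neg_mul]
    have hbub := bubble (fun g : Fin k → Fin (n-1) => cullisDet (A'.submatrix id g) * B'.det)
      ((-1:F)^(∑ j : Fin k, (j:ℕ))) hswapΦ hmono'
    set ι : Fin (n-1) → Fin n := Fin.castLE (by omega) with hι
    set dd : Finset (Fin (n-1)) := univ.filter (fun l => ι l ∈ d) with hdd
    set comp : Finset (Fin (n-1)) := univ.filter (fun l => ¬ (ι l ∈ d)) with hcomp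
    have hιval : ∀ l : Fin (n-1), (ι l : ℕ) = (l : ℕ) := fun l => rfl
    have hddcard : dd.card = k - 1 := by
      have hbij : dd.card = (d.erase ⟨n-1, by omega⟩).card := by
        refine Finset.card_bij (fun l _ => ι l) ?_ ?_ ?_
        · intro l hl
          beta_reduce
          rw [Finset.mem_erase]
          refine ⟨?_, (Finset.mem_filter.mp hl).2⟩
          intro hh
          have h1 : (ι l : ℕ) = n - 1 := by rw [hh]
          have h2 := l.isLt
          rw [hιval] at h1
          omega
        · intro a _ b _ hab
          beta_reduce at hab
          exact Fin.ext (by rw [← hιval a, ← hιval b, hab])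
        · intro x hx
          rw [Finset.mem_erase] at hx
          have hxlt : (x:ℕ) < n - 1 := by
            have h1 := x.isLt
            have h2 : (x:ℕ) ≠ n - 1 := fun hh => hx.1 (Fin.ext hh)
            omega
          refine ⟨⟨(x:ℕ), hxlt⟩, ?_, ?_⟩
          · rw [Finset.mem_filter]
            exact ⟨Finset.mem_univ _, by rw [show ι ⟨(x:ℕ), hxlt⟩ = x from Fin.ext rfl]; exact hx.2⟩
          · beta_reduce
            exact Fin.ext rfl
      rw [hbij, Finset.card_erase_of_mem hmem, hd]
    have hcompcard : comp.card = n - k := by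
      have hpart := Finset.card_filter_add_card_filter_not
        (s := (univ : Finset (Fin (n-1)))) (p := fun l => ι l ∈ d)
      rw [← hdd, ← hcomp] at hpart
      have hu : (univ : Finset (Fin (n-1))).card = n-1 := by simp
      rw [hu, hddcard] at hpart
      omega
    rw [hmain, ← Finset.sum_filter_add_sum_filter_not univ (fun l => ι l ∈ d), ← hdd, ← hcomp]
    have hzero1 : ∀ l ∈ dd, -(cullisDet (A'.submatrix id (G l)) * B'.det) = 0 := by
      intro l hl
      have hld : ι l ∈ d := (Finset.mem_filter.mp hl).2
      obtain ⟨j, hj⟩ := hembSurj _ hld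
      have hjne : j ≠ last := by
        intro hh
        subst hh
        have h1 : (d.orderEmbOfFin hd last : ℕ) = (l:ℕ) := by
          rw [hj, hιval]
        rw [hlast] at h1
        have := l.isLt
        omega
      have hGeq : G l j = l := by
        rw [hGoth l j hjne]
        refine Fin.ext ?_
        rw [Fin.val_mk, ← hιval l, hj]
      have hninj : ¬ Function.Injective (G l) := by
        intro hinj
        exact hjne (hinj (hGeq.trans (hGlast l).symm))
      rw [cullisDet_zero_of_not_injective A' (G l) hninj, zero_mul, neg_zero]
    rw [Finset.sum_eq_zero hzero1, zero_add]
    have hterm : ∀ l ∈ comp, -(cullisDet (A'.submatrix id (G l)) * B'.det)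
        = ((-1:F)^(∑ i ∈ d, (i:ℕ)) * (-1:F)^(∑ j : Fin k, (j:ℕ)) * (-1:F)^(k+n-1))
            * (-1:F)^((comp.filter (fun y => y < l)).card) := by
      intro l hl
      have hld : ι l ∉ d := (Finset.mem_filter.mp hl).2
      have hnel : ∀ j : Fin k, (d.orderEmbOfFin hd j : ℕ) ≠ (l:ℕ) := by
        intro j hh
        apply hld
        have heq2 : ι l = d.orderEmbOfFin hd j := Fin.ext (by rw [hιval]; exact hh.symm)
        rw [heq2]
        exact hemb j
      have hGinj : Function.Injective (G l) := by
        intro a b hab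
        by_cases ha : a = last <;> by_cases hb2 : b = last
        · rw [ha, hb2]
        · exfalso
          rw [ha, hGlast, hGoth l b hb2] at hab
          exact hnel b (congrArg Fin.val hab).symm
        · exfalso
          rw [hb2, hGlast, hGoth l a ha] at hab
          exact hnel a (congrArg Fin.val hab)
        · rw [hGoth l a ha, hGoth l b hb2] at hab
          have h1 := congrArg Fin.val hab
          simp only [Fin.val_mk] at h1
          exact (d.orderEmbOfFin hd).injective (Fin.ext h1)
      have hsortG : ∀ j j' : Fin k, j < j' → j ≠ last → j' ≠ last → G l j < G l j' := by
        intro j j' h1 h2 h3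
        rw [hGoth l j h2, hGoth l j' h3, Fin.lt_def]
        exact Fin.lt_def.mp ((d.orderEmbOfFin hd).strictMono h1)
      have hrightG : ∀ j, last < j → G l last < G l j := by
        intro j hj
        exfalso
        have h1 := Fin.lt_def.mp hj
        have h2 := j.isLt
        simp only [hlastdef, Fin.val_mk] at h1
        omega
      have hbubl := hbub _ (G l) last hGinj hsortG hrightG rfl
      beta_reduce at hbubl
      have hA : ((univ : Finset (Fin k)).filter (fun j => j < last ∧ G l last < G l j)).card + 1
          = ((univ : Finset (Fin k)).filter
              (fun j => (l:ℕ) < (d.orderEmbOfFin hd j : ℕ))).card := by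
        have hset : (univ : Finset (Fin k)).filter (fun j => (l:ℕ) < (d.orderEmbOfFin hd j : ℕ))
            = insert last ((univ : Finset (Fin k)).filter
                (fun j => j < last ∧ G l last < G l j)) := by
          ext j
          simp only [Finset.mem_filter, Finset.mem_insert, Finset.mem_univ, true_and]
          constructor
          · intro h1
            rcases eq_or_ne j last with rfl | hj
            · exact Or.inl rfl
            · refine Or.inr ⟨lt_of_le_of_ne (hle_last j) hj, ?_⟩
              rw [hGlast, hGoth l j hj, Fin.lt_def]
              exact h1
          · rintro (rfl | ⟨h1, h2⟩)
            · rw [hlast]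
              have := l.isLt
              omega
            · have hj : j ≠ last := ne_of_lt h1
              rw [hGlast, hGoth l j hj, Fin.lt_def] at h2
              exact h2
        rw [hset, Finset.card_insert_of_notMem (by simp)]
      have hB : ((univ : Finset (Fin k)).filter
            (fun j => (d.orderEmbOfFin hd j : ℕ) < (l:ℕ))).card
          + ((univ : Finset (Fin k)).filter
            (fun j => (l:ℕ) < (d.orderEmbOfFin hd j : ℕ))).card = k := by
        have hpart := Finset.card_filter_add_card_filter_not
          (s := (univ : Finset (Fin k))) (p := fun j => (d.orderEmbOfFin hd j : ℕ) < (l:ℕ))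
        have hneg2 : (univ : Finset (Fin k)).filter
              (fun j => ¬ ((d.orderEmbOfFin hd j : ℕ) < (l:ℕ)))
            = (univ : Finset (Fin k)).filter (fun j => (l:ℕ) < (d.orderEmbOfFin hd j : ℕ)) := by
          ext j
          simp only [Finset.mem_filter, Finset.mem_univ, true_and]
          have := hnel j
          omega
        rw [hneg2] at hpart
        simpa using hpart
      have hC2 : ((univ : Finset (Fin k)).filter
            (fun j => (d.orderEmbOfFin hd j : ℕ) < (l:ℕ))).card
          = (dd.filter (fun y => y < l)).card := by
        refine Finset.card_bij (fun j hj => (⟨(d.orderEmbOfFin hd j : ℕ), by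
          have h1 := (Finset.mem_filter.mp hj).2
          have := l.isLt
          omega⟩ : Fin (n-1))) ?_ ?_ ?_
        · intro j hj
          have h1 := (Finset.mem_filter.mp hj).2
          rw [Finset.mem_filter]
          refine ⟨?_, ?_⟩
          · rw [hdd, Finset.mem_filter]
            refine ⟨Finset.mem_univ _, ?_⟩
            rw [show ι ⟨(d.orderEmbOfFin hd j : ℕ), by
              have := l.isLt; omega⟩ = d.orderEmbOfFin hd j from Fin.ext rfl]
            exact hemb j
          · rw [Fin.lt_def]
            exact h1
        · intro a _ b _ hab
          have h1 := congrArg Fin.val hab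
          simp only [Fin.val_mk] at h1
          exact (d.orderEmbOfFin hd).injective (Fin.ext h1)
        · intro y hy
          rw [Finset.mem_filter] at hy
          have hy1 : ι y ∈ d := by
            have := hy.1
            rw [hdd, Finset.mem_filter] at this
            exact this.2
          obtain ⟨j, hj⟩ := hembSurj _ hy1
          have hjval : (d.orderEmbOfFin hd j : ℕ) = (y:ℕ) := by rw [hj, hιval]
          refine ⟨j, ?_, ?_⟩
          · rw [Finset.mem_filter]
            refine ⟨Finset.mem_univ _, ?_⟩
            rw [hjval]
            exact Fin.lt_def.mp hy.2
          · exact Fin.ext (by rw [Fin.val_mk, hjval])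
      have hD : (comp.filter (fun y => y < l)).card + (dd.filter (fun y => y < l)).card
          = (l:ℕ) := by
        have h0 : ((univ : Finset (Fin (n-1))).filter (fun y => y < l)).card = (l:ℕ) :=
          card_filter_lt_fin l
        have hpart := Finset.card_filter_add_card_filter_not
          (s := (univ : Finset (Fin (n-1))).filter (fun y => y < l)) (p := fun y => ι y ∈ d)
        have e1 : (((univ : Finset (Fin (n-1))).filter (fun y => y < l)).filter
              (fun y => ι y ∈ d)) = dd.filter (fun y => y < l) := by
          ext y
          simp only [hdd, Finset.mem_filter, Finset.mem_univ, true_and]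
          tauto
        have e2 : (((univ : Finset (Fin (n-1))).filter (fun y => y < l)).filter
              (fun y => ¬ (ι y ∈ d))) = comp.filter (fun y => y < l) := by
          ext y
          simp only [hcomp, Finset.mem_filter, Finset.mem_univ, true_and]
          tauto
        rw [e1, e2, h0] at hpart
        omega
      have hsumG : (∑ j : Fin k, ((G l j : ℕ))) + (n-1) = (∑ i ∈ d, (i:ℕ)) + (l:ℕ) := by
        have h1 : (∑ j : Fin k, ((G l j : ℕ)))
            = (∑ j ∈ univ.erase last, ((G l j : ℕ))) + ((G l last : ℕ)) :=
          (Finset.sum_erase_add univ _ (Finset.mem_univ last)).symm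
        have h2 : (∑ j : Fin k, ((d.orderEmbOfFin hd j : ℕ)))
            = (∑ j ∈ univ.erase last, ((d.orderEmbOfFin hd j : ℕ)))
              + ((d.orderEmbOfFin hd last : ℕ)) :=
          (Finset.sum_erase_add univ _ (Finset.mem_univ last)).symm
        have h3 : ∀ j ∈ univ.erase last, ((G l j : ℕ)) = ((d.orderEmbOfFin hd j : ℕ)) := by
          intro j hj
          have hjne := (Finset.mem_erase.mp hj).1
          rw [hGoth l j hjne]
        have h4 := Finset.sum_congr rfl h3
        rw [hsum_d, h2, h1, h4, hGlast, hlast]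
        omega
      have hnum : ((univ : Finset (Fin k)).filter
            (fun j => j < last ∧ G l last < G l j)).card + (l:ℕ) + 1
          = k + (comp.filter (fun y => y < l)).card := by
        omega
      rw [hbubl]
      have lhs_eq : -((-1:F)^(((univ : Finset (Fin k)).filter
              (fun j => j < last ∧ G l last < G l j)).card)
            * (-1:F)^(∑ j : Fin k, ((G l j : ℕ))) * (-1:F)^(∑ j : Fin k, (j:ℕ)))
          = (-1:F)^((((univ : Finset (Fin k)).filter
              (fun j => j < last ∧ G l last < G l j)).card)
              + (∑ j : Fin k, ((G l j : ℕ))) + (∑ j : Fin k, (j:ℕ)) + 1) := by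
        rw [pow_add, pow_add, pow_add, pow_one]
        ring
      have rhs_eq : ((-1:F)^(∑ i ∈ d, (i:ℕ)) * (-1:F)^(∑ j : Fin k, (j:ℕ))
              * (-1:F)^(k+n-1)) * (-1:F)^((comp.filter (fun y => y < l)).card)
          = (-1:F)^((∑ i ∈ d, (i:ℕ)) + (∑ j : Fin k, (j:ℕ)) + (k+n-1)
              + (comp.filter (fun y => y < l)).card) := by
        rw [pow_add, pow_add, pow_add]
      rw [lhs_eq, rhs_eq]
      apply neg_one_pow_parity
      omega
    rw [Finset.sum_congr rfl hterm, ← Finset.mul_sum]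
    have hrank : (∑ l ∈ comp, ((-1:F))^((comp.filter (fun y => y < l)).card))
        = ∑ t ∈ Finset.range comp.card, ((-1:F))^t :=
      sum_rank comp (fun t => ((-1:F))^t)
    have hoddnk : ¬ Even (n-k) := by
      have h1 := Nat.odd_iff.mp hodd
      rw [Nat.not_even_iff]
      omega
    have heven : ((-1:F))^(k+n-1) = 1 := by
      refine Even.neg_one_pow ?_
      have h1 := Nat.odd_iff.mp hodd
      rw [Nat.even_iff]
      omega
    rw [hrank, hcompcard, sum_range_neg_one_pow, if_neg hoddnk, mul_one, heven, mul_one]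

  · -- case n-1 ∉ d
    have hlt : ∀ j, (d.orderEmbOfFin hd j : ℕ) < n-1 := by
      intro j
      have h1 := hemb j
      have h2 : (d.orderEmbOfFin hd j : ℕ) ≤ n-1 := by
        have := (d.orderEmbOfFin hd j).isLt; omega
      rcases lt_or_eq_of_le h2 with h | h
      · exact h
      · exact absurd (show (⟨n-1, by omega⟩ : Fin n) ∈ d from by
          rwa [show (⟨n-1, by omega⟩ : Fin n) = d.orderEmbOfFin hd j from Fin.ext h.symm]) hmem
    have hAPd : A' * Pd = A'.submatrix id (fun j => (⟨(d.orderEmbOfFin hd j : ℕ), hlt j⟩ : Fin (n-1))) := by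
      ext i j
      rw [Matrix.mul_apply, Matrix.submatrix_apply]
      rw [Finset.sum_eq_single (⟨(d.orderEmbOfFin hd j : ℕ), hlt j⟩ : Fin (n-1))]
      · simp only [hPd, Matrix.submatrix_apply, Pmat, id_eq, Fin.val_mk]
        have hne : ¬ ((d.orderEmbOfFin hd j : ℕ) = n - 1) := by have := hlt j; omega
        rw [if_pos trivial, if_neg hne, sub_zero, mul_one]
      · intro b _ hb
        have hbv : ¬ ((d.orderEmbOfFin hd j : ℕ) = (b:ℕ)) := by
          intro hh; exact hb (Fin.ext hh.symm)
        have hne : ¬ ((d.orderEmbOfFin hd j : ℕ) = n - 1) := by have := hlt j; omega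
        simp only [hPd, Matrix.submatrix_apply, Pmat, id_eq]
        rw [if_neg hbv, if_neg hne, sub_zero, mul_zero]
      · intro hmem'; exact absurd (Finset.mem_univ _) hmem'
    have hSMg : StrictMono (fun j => (⟨(d.orderEmbOfFin hd j : ℕ), hlt j⟩ : Fin (n-1))) := by
      intro a b hab
      exact Fin.mk_lt_mk.mpr (Fin.lt_def.mp (hembSM hab))
    rw [hAPd, hmono' _ hSMg, hsum_d]
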